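/- For all H ∈ (0,1) and K ∈ (0,1), y^{2−2HK}·h(y) converges to H²K(K−1) as y → ∞. Equivalently, as ε → 0+, 1 + (1−ε)^{2HK} − 2^{1−K}(1 + (1−ε)^{2H})^K = H²K(K−1)ε² + o(ε²). -/

import Mathlib

open Filter Asymptotics

noncomputable def bifBmF (H K : ℝ) (x : ℝ) : ℝ :=
  1 + (1 - x) ^ (2*H*K) - 2 ^ (1 - K) * (1 + (1 - x) ^ (2*H)) ^ K

noncomputable def bifBmF' (H K : ℝ) (x : ℝ) : ℝ :=
  -(2*H*K) * (1 - x) ^ (2*H*K - 1)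
    + 2 ^ (1 - K) * K * (1 + (1 - x) ^ (2*H)) ^ (K - 1) * (2*H*(1 - x) ^ (2*H - 1))

lemma hasDerivAt_bifBmF (H K : ℝ) {x : ℝ} (hx : x < 1) :
    HasDerivAt (bifBmF H K) (bifBmF' H K x) x := by
  have h1x : (0:ℝ) < 1 - x := by linarith
  have h1 : HasDerivAt (fun y : ℝ => 1 - y) (-1) x := (hasDerivAt_id x).const_sub 1
  have h2 : HasDerivAt (fun y : ℝ => (1 - y) ^ (2*H*K))
      ((-1) * (2*H*K) * (1 - x) ^ (2*H*K - 1)) x := h1.rpow_const (Or.inl h1x.ne')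
  have h3 : HasDerivAt (fun y : ℝ => (1 - y) ^ (2*H))
      ((-1) * (2*H) * (1 - x) ^ (2*H - 1)) x := h1.rpow_const (Or.inl h1x.ne')
  have h4 : HasDerivAt (fun y : ℝ => 1 + (1 - y) ^ (2*H))
      ((-1) * (2*H) * (1 - x) ^ (2*H - 1)) x := h3.const_add 1
  have hpos : (0:ℝ) < 1 + (1 - x) ^ (2*H) := by positivity
  have h5 := h4.rpow_const (p := K) (Or.inl hpos.ne')
  have h6 := (h2.const_add 1).sub (h5.const_mul ((2:ℝ) ^ (1 - K)))
  unfold bifBmF bifBmF'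
  exact h6.congr_deriv (by ring)

lemma hasDerivAt_bifBmF' (H K : ℝ) :
    HasDerivAt (bifBmF' H K) (2*H^2*K*(K-1)) 0 := by
  have h1 : HasDerivAt (fun y : ℝ => 1 - y) (-1) 0 := (hasDerivAt_id 0).const_sub 1
  have t1 : HasDerivAt (fun y : ℝ => (1 - y) ^ (2*H*K - 1))
      ((-1) * (2*H*K - 1) * (1 - (0:ℝ)) ^ (2*H*K - 1 - 1)) 0 :=
    h1.rpow_const (Or.inl (by norm_num))
  have t3 : HasDerivAt (fun y : ℝ => (1 - y) ^ (2*H))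
      ((-1) * (2*H) * (1 - (0:ℝ)) ^ (2*H - 1)) 0 := h1.rpow_const (Or.inl (by norm_num))
  have t4 : HasDerivAt (fun y : ℝ => 1 + (1 - y) ^ (2*H))
      ((-1) * (2*H) * (1 - (0:ℝ)) ^ (2*H - 1)) 0 := t3.const_add 1
  have hpos : (0:ℝ) < 1 + (1 - (0:ℝ)) ^ (2*H) := by positivity
  have t5 := t4.rpow_const (p := K - 1) (Or.inl hpos.ne')
  have t6 : HasDerivAt (fun y : ℝ => (1 - y) ^ (2*H - 1))
      ((-1) * (2*H - 1) * (1 - (0:ℝ)) ^ (2*H - 1 - 1)) 0 := h1.rpow_const (Or.inl (by norm_num))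
  have tA := t1.const_mul (-(2*H*K))
  have tB := (t5.const_mul ((2:ℝ) ^ (1 - K) * K)).mul (t6.const_mul (2*H))
  have tfin := tA.add tB
  unfold bifBmF'
  refine tfin.congr_deriv (Eq.symm ?_)
  simp only [sub_zero, Real.one_rpow, mul_one, one_mul]
  have e1 : (2:ℝ) ^ (1 - K) * (1 + 1 : ℝ) ^ (K - 1 - 1) = 1/2 := by
    norm_num
    rw [← Real.rpow_add (by norm_num : (0:ℝ) < 2)]
    have : 1 - K + (K - 1 - 1) = (-1 : ℝ) := by ring
    rw [this, Real.rpow_neg_one]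
    norm_num
  have e2 : (2:ℝ) ^ (1 - K) * (1 + 1 : ℝ) ^ (K - 1) = 1 := by
    norm_num
    rw [← Real.rpow_add (by norm_num : (0:ℝ) < 2)]
    have : 1 - K + (K - 1) = (0 : ℝ) := by ring
    rw [this, Real.rpow_zero]
  linear_combination (4*H^2*K*(K-1)) * e1 + (2*H*K*(2*H-1)) * e2

lemma bifBmF_zero (H K : ℝ) : bifBmF H K 0 = 0 := by
  have h2 : (2:ℝ) ^ (1 - K) * 2 ^ K = 2 := by
    rw [← Real.rpow_add (by norm_num : (0:ℝ) < 2)]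
    norm_num
  simp only [bifBmF, sub_zero, Real.one_rpow]
  norm_num
  linarith [h2]

lemma bifBmF'_zero (H K : ℝ) : bifBmF' H K 0 = 0 := by
  have h2 : (2:ℝ) ^ (1 - K) * 2 ^ (K - 1) = 1 := by
    rw [← Real.rpow_add (by norm_num : (0:ℝ) < 2)]
    norm_num
  simp only [bifBmF', sub_zero, Real.one_rpow, mul_one]
  norm_num
  linear_combination (2*H*K) * h2

lemma bifBm_key (H K : ℝ) :
    Filter.Tendsto (fun x => bifBmF H K x / x ^ 2) (nhdsWithin 0 {(0:ℝ)}ᶜ)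
      (nhds (H^2 * K * (K - 1))) := by
  have hsq : ∀ x : ℝ, HasDerivAt (fun y : ℝ => y ^ 2) (2 * x) x := fun x => by
    simpa using hasDerivAt_pow 2 x
  have hev : ∀ᶠ x in nhdsWithin (0:ℝ) {(0:ℝ)}ᶜ, x < 1 :=
    eventually_nhdsWithin_of_eventually_nhds
      (eventually_of_mem (Iio_mem_nhds (by norm_num)) fun x hx => hx)
  apply HasDerivAt.lhopital_zero_nhdsNE (f' := bifBmF' H K) (g' := fun x => 2 * x)
  · exact hev.mono fun x hx => hasDerivAt_bifBmF H K hx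
  · exact Filter.Eventually.of_forall fun x => hsq x
  · filter_upwards [self_mem_nhdsWithin] with x hx
    simpa using Set.mem_compl_singleton_iff.mp hx
  · have := (hasDerivAt_bifBmF H K (by norm_num : (0:ℝ) < 1)).continuousAt.tendsto
    rw [bifBmF_zero] at this
    exact this.mono_left nhdsWithin_le_nhds
  · have : Filter.Tendsto (fun x : ℝ => x ^ 2) (nhds 0) (nhds 0) := by
      simpa using (continuous_pow 2).tendsto (0:ℝ)
    exact this.mono_left nhdsWithin_le_nhds
  · have hslope := hasDerivAt_iff_tendsto_slope.mp (hasDerivAt_bifBmF' H K)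
    have heq : (fun x => bifBmF' H K x / (2 * x))
        = fun x => slope (bifBmF' H K) 0 x / 2 := by
      funext x
      rw [slope_def_field, bifBmF'_zero, sub_zero, sub_zero, div_div, mul_comm]
    rw [heq]
    have := hslope.div_const 2
    convert this using 2
    ring

theorem bifBm_h_asymptotics (H K : ℝ) (hH : H ∈ Set.Ioo (0:ℝ) 1) (hK : K ∈ Set.Ioo (0:ℝ) 1) :
    Tendsto (fun y : ℝ =>
        y ^ (2 - 2*H*K) * (y ^ (2*H*K) + (y - 1) ^ (2*H*K)
          - (2 / 2 ^ K) * (y ^ (2*H) + (y - 1) ^ (2*H)) ^ K))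
      atTop (nhds (H^2 * K * (K - 1)))
    ∧
    (fun ε : ℝ =>
        1 + (1 - ε) ^ (2*H*K) - 2 ^ (1 - K) * (1 + (1 - ε) ^ (2*H)) ^ K
          - H^2 * K * (K - 1) * ε^2)
      =o[nhdsWithin 0 (Set.Ioi 0)] (fun ε : ℝ => ε^2) := by
  have key := bifBm_key H K
  have T : Filter.Tendsto (fun x => bifBmF H K x / x ^ 2) (nhdsWithin 0 (Set.Ioi 0))
      (nhds (H^2 * K * (K - 1))) :=
    key.mono_left (nhdsWithin_mono 0 fun x hx => Set.mem_compl_singleton_iff.mpr (ne_of_gt hx))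
  constructor
  · -- part 1
    have hc := T.comp tendsto_inv_atTop_nhdsGT_zero
    apply Filter.Tendsto.congr' _ hc
    filter_upwards [eventually_gt_atTop (1:ℝ)] with y hy
    have hy0 : (0:ℝ) < y := by linarith
    have hy1 : (0:ℝ) ≤ y - 1 := by linarith
    have h2HK : (0:ℝ) < y ^ (2*H*K) := Real.rpow_pos_of_pos hy0 _
    have h2H : (0:ℝ) < y ^ (2*H) := Real.rpow_pos_of_pos hy0 _
    have hinv : 1 - y⁻¹ = (y - 1) / y := by field_simp
    have hA : (1 - y⁻¹) ^ (2*H*K) = (y-1) ^ (2*H*K) / y ^ (2*H*K) := by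
      rw [hinv, Real.div_rpow hy1 hy0.le]
    have hA2 : (1 - y⁻¹) ^ (2*H) = (y-1) ^ (2*H) / y ^ (2*H) := by
      rw [hinv, Real.div_rpow hy1 hy0.le]
    have hB : (1 + (1 - y⁻¹) ^ (2*H)) ^ K
        = (y ^ (2*H) + (y-1) ^ (2*H)) ^ K / y ^ (2*H*K) := by
      rw [hA2]
      have : 1 + (y-1) ^ (2*H) / y ^ (2*H) = (y ^ (2*H) + (y-1) ^ (2*H)) / y ^ (2*H) := by
        field_simp
      rw [this, Real.div_rpow (by positivity) h2H.le, ← Real.rpow_mul hy0.le]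
    have hP : (2:ℝ)/2^K = 2^(1-K) := by
      rw [Real.rpow_sub (by norm_num : (0:ℝ) < 2), Real.rpow_one]
    have hD : y ^ (2 - 2*H*K) = y^(2:ℕ) / y ^ (2*H*K) := by
      rw [Real.rpow_sub hy0]
      congr 1
      rw [← Real.rpow_natCast y 2]
      norm_num
    show bifBmF H K y⁻¹ / (y⁻¹) ^ 2 = _
    simp only [bifBmF]
    rw [hA, hB, hP, hD]
    field_simp
  · -- part 2
    rw [isLittleO_iff_tendsto']
    · apply Filter.Tendsto.congr'
        (f₁ := fun ε => bifBmF H K ε / ε ^ 2 - H^2 * K * (K - 1))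
      · filter_upwards [self_mem_nhdsWithin] with ε hε
        have hε2 : (ε:ℝ) ^ 2 ≠ 0 := pow_ne_zero 2 (ne_of_gt hε)
        rw [sub_div, mul_div_assoc, div_self hε2, mul_one]
        rfl
      · have := T.sub_const (H^2 * K * (K - 1))
        rwa [sub_self] at this
    · filter_upwards [self_mem_nhdsWithin] with ε hε h
      exact absurd ((pow_eq_zero_iff two_ne_zero).mp h) (ne_of_gt hε)
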